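/- For r,s ≥ 4 both even, the torus C_r □ C_s has adim_4(C_r □ C_s) = 2: any vertex together with its unique diametral (antipodal) vertex is a 4-ARS, and no singleton is a 4-ARS since each single vertex forms only a 1-ARS. -/

import Mathlib

open SimpleGraph
open Fin.NatCast Fin.CommRing

/-- Two vertices have the same distances to every vertex of `S`. -/
def sameDists {V : Type*} (G : SimpleGraph V) (S : Set V) (x y : V) : Prop :=
  ∀ z ∈ S, G.dist x z = G.dist y z

/-- The equivalence class (outside `S`) of `x` under the equal-distance relation `R_S`. -/
def cls {V : Type*} (G : SimpleGraph V) (S : Set V) (x : V) : Set V :=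
  {y | y ∉ S ∧ sameDists G S x y}

/-- `S` is a `k`-antiresolving set: `S` is nonempty, does not cover `V`, and the minimum
size of an equivalence class of `R_S` on `V ∖ S` equals `k`. -/
def IsKARS {V : Type*} (G : SimpleGraph V) (k : ℕ) (S : Set V) : Prop :=
  S.Nonempty ∧ Sᶜ.Nonempty ∧
    (∀ x ∉ S, k ≤ (cls G S x).ncard) ∧ ∃ x ∉ S, (cls G S x).ncard = k

/-- The `k`-metric antidimension: the smallest cardinality of a `k`-antiresolving set,
`⊤` (i.e. `+∞`) if none exists. -/
noncomputable def adim {V : Type*} (G : SimpleGraph V) (k : ℕ) : ℕ∞ :=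
  sInf ((fun S => (S.ncard : ℕ∞)) '' {S : Set V | IsKARS G k S})


lemma fin_sub_val {n : ℕ} (a b : Fin n) :
    (a - b).val = if b.val ≤ a.val then a.val - b.val else a.val + n - b.val := by
  have ha := a.isLt; have hb := b.isLt
  rw [Fin.sub_def]
  simp only []
  split_ifs with h
  · have : n - b.val + a.val = n + (a.val - b.val) := by omega
    rw [this, Nat.add_mod_left, Nat.mod_eq_of_lt (by omega)]
  · rw [Nat.mod_eq_of_lt (by omega)]; omega

lemma fin_add_val {n : ℕ} (a b : Fin n) :
    (a + b).val = if a.val + b.val < n then a.val + b.val else a.val + b.val - n := by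
  have ha := a.isLt; have hb := b.isLt
  rw [Fin.add_def]
  simp only []
  split_ifs with h
  · exact Nat.mod_eq_of_lt h
  · have h2 : a.val + b.val = n + (a.val + b.val - n) := by omega
    rw [h2, Nat.add_mod_left, Nat.mod_eq_of_lt (by omega)]; omega


lemma fin_neg_val {n : ℕ} [NeZero n] (a : Fin n) :
    (-a).val = if a.val = 0 then 0 else n - a.val := by
  have ha := a.isLt
  rw [show -a = 0 - a by rw [zero_sub], fin_sub_val]
  simp only [Fin.val_zero]
  split_ifs <;> simp_all <;> omega

/-- Distance-like function on the cycle. -/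
def cD {n : ℕ} (u v : Fin n) : ℕ := min (v - u).val (u - v).val

lemma cD_le_walk {n : ℕ} {u v : Fin n} (w : (cycleGraph n).Walk u v) :
    cD u v ≤ w.length := by
  induction w with
  | nil => simp [cD, fin_sub_val]
  | @cons a b c h p ih =>
    rw [Walk.length_cons]
    haveI : NeZero n := ⟨by have := a.isLt; omega⟩
    have hadj := cycleGraph_adj'.mp h
    have h1 := a.isLt; have h2 := b.isLt; have h3 := c.isLt
    have e1 : c - a = (c - b) + (b - a) := by ring
    have e2 : a - c = (a - b) + (b - c) := by ring
    have e3 : b - a = -(a - b) := by ring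
    unfold cD at *
    rw [e1, e2, e3] at *
    simp only [fin_add_val, fin_sub_val, fin_neg_val] at hadj ih ⊢
    split_ifs at hadj ih ⊢ <;> omega

lemma cycle_dist_le_add {n : ℕ} [NeZero n] (hn : 2 ≤ n) (u : Fin n) (k : ℕ) :
    (cycleGraph n).dist u (u + (k : Fin n)) ≤ k := by
  induction k with
  | zero => simp
  | succ k ih =>
    have hconn : (cycleGraph n).Connected := by
      obtain ⟨m, rfl⟩ : ∃ m, n = m + 1 := ⟨n - 1, by omega⟩
      exact cycleGraph_connected
    have hone : ((1 : Fin n)).val = 1 := by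
      rw [show (1 : Fin n) = ((1 : ℕ) : Fin n) by push_cast; rfl, Fin.val_cast_of_lt (by omega)]
    have hadj : (cycleGraph n).Adj (u + (k : Fin n)) (u + ((k + 1 : ℕ) : Fin n)) := by
      rw [cycleGraph_adj']
      right
      have e : (u + ((k + 1 : ℕ) : Fin n)) - (u + (k : Fin n)) = 1 := by push_cast; ring
      rw [e, hone]
    calc (cycleGraph n).dist u (u + ((k + 1 : ℕ) : Fin n))
        ≤ (cycleGraph n).dist u (u + (k : Fin n))
          + (cycleGraph n).dist (u + (k : Fin n)) (u + ((k + 1 : ℕ) : Fin n)) :=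
          hconn.dist_triangle
      _ ≤ k + 1 := by
          rw [dist_eq_one_iff_adj.mpr hadj]
          omega

lemma cycle_dist {n : ℕ} (hn : 2 ≤ n) (u v : Fin n) :
    (cycleGraph n).dist u v = cD u v := by
  haveI : NeZero n := ⟨by omega⟩
  have hconn : (cycleGraph n).Connected := by
    obtain ⟨m, rfl⟩ : ∃ m, n = m + 1 := ⟨n - 1, by omega⟩
    exact cycleGraph_connected
  refine le_antisymm (le_min ?_ ?_) ?_
  · have h := cycle_dist_le_add hn u (v - u).val
    rwa [Fin.cast_val_eq_self, add_sub_cancel] at h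
  · have h := cycle_dist_le_add hn v (u - v).val
    rwa [Fin.cast_val_eq_self, add_sub_cancel, dist_comm] at h
  · obtain ⟨w, hw⟩ := hconn.exists_walk_length_eq_dist u v
    rw [← hw]
    exact cD_le_walk w

lemma boxProd_dist_le_walk {α β : Type*} {G : SimpleGraph α} {H : SimpleGraph β}
    (hG : G.Connected) (hH : H.Connected) {x y : α × β} (w : (G □ H).Walk x y) :
    G.dist x.1 y.1 + H.dist x.2 y.2 ≤ w.length := by
  induction w with
  | nil => simp
  | @cons a b c h p ih =>
    rw [Walk.length_cons]
    rcases h with ⟨h1, h2⟩ | ⟨h1, h2⟩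
    · have t1 : G.dist a.1 c.1 ≤ G.dist a.1 b.1 + G.dist b.1 c.1 := hG.dist_triangle
      rw [dist_eq_one_iff_adj.mpr h1] at t1
      rw [show a.2 = b.2 from h2]
      omega
    · have t1 : H.dist a.2 c.2 ≤ H.dist a.2 b.2 + H.dist b.2 c.2 := hH.dist_triangle
      rw [dist_eq_one_iff_adj.mpr h1] at t1
      rw [show a.1 = b.1 from h2]
      omega

lemma boxProd_dist {α β : Type*} {G : SimpleGraph α} {H : SimpleGraph β}
    (hG : G.Connected) (hH : H.Connected) (x y : α × β) :
    (G □ H).dist x y = G.dist x.1 y.1 + H.dist x.2 y.2 := by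
  refine le_antisymm ?_ ?_
  · obtain ⟨w1, hw1⟩ := hG.exists_walk_length_eq_dist x.1 y.1
    obtain ⟨w2, hw2⟩ := hH.exists_walk_length_eq_dist x.2 y.2
    have hle := SimpleGraph.dist_le
      ((w1.boxProdLeft H x.2).append (Walk.boxProdRight G y.1 w2))
    rw [Walk.length_append] at hle
    have e1 : (w1.boxProdLeft H x.2).length = w1.length := Walk.length_map _ _
    have e2 : (Walk.boxProdRight G y.1 w2).length = w2.length := Walk.length_map _ _
    rw [e1, e2, hw1, hw2] at hle
    exact hle
  · obtain ⟨w, hw⟩ := ((hG.boxProd hH)).exists_walk_length_eq_dist x y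
    rw [← hw]
    exact boxProd_dist_le_walk hG hH w

lemma cD_comm {n : ℕ} (u v : Fin n) : cD u v = cD v u := min_comm _ _

lemma cD_ap {n : ℕ} [NeZero n] (he : Even n) (hn : 2 ≤ n) (u t : Fin n) :
    cD t (u + (↑(n / 2) : Fin n)) + cD t u = n / 2 := by
  have hh : ((↑(n / 2) : Fin n)).val = n / 2 := Fin.val_cast_of_lt (by omega)
  have h2 : n % 2 = 0 := Nat.even_iff.mp he
  have h3 := u.isLt; have h4 := t.isLt
  simp only [cD, fin_sub_val, fin_add_val, hh]
  split_ifs <;> omega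

lemma cD_add_right {n : ℕ} [NeZero n] (u : Fin n) (p : ℕ) (hp : 2 * p ≤ n) :
    cD u (u + (↑p : Fin n)) = p := by
  have hn := u.isLt
  by_cases h0 : p = 0
  · subst h0; simp only [Nat.cast_zero, add_zero, cD, fin_sub_val]
    simp
  have hh : ((↑p : Fin n)).val = p := Fin.val_cast_of_lt (by omega)
  have e1 : u + (↑p : Fin n) - u = ↑p := by ring
  have e2 : u - (u + (↑p : Fin n)) = -↑p := by ring
  rw [cD, e1, e2, fin_neg_val, hh]
  split_ifs <;> omega

lemma cD_sub_right {n : ℕ} [NeZero n] (u : Fin n) (p : ℕ) (hp : 2 * p ≤ n) :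
    cD u (u - (↑p : Fin n)) = p := by
  have hn := u.isLt
  by_cases h0 : p = 0
  · subst h0; simp only [Nat.cast_zero, sub_zero, cD, fin_sub_val]
    simp
  have hh : ((↑p : Fin n)).val = p := Fin.val_cast_of_lt (by omega)
  have e1 : u - (↑p : Fin n) - u = -↑p := by ring
  have e2 : u - (u - (↑p : Fin n)) = ↑p := by ring
  rw [cD, e1, e2, fin_neg_val, hh]
  split_ifs <;> omega

lemma fin_add_ne_sub {n : ℕ} [NeZero n] (u : Fin n) (p : ℕ) (hp1 : 1 ≤ p) (hp2 : 2 * p < n) :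
    u + (↑p : Fin n) ≠ u - (↑p : Fin n) := by
  intro h
  rw [sub_eq_add_neg] at h
  have h2 : (↑p : Fin n) = -↑p := add_left_cancel h
  have hh : ((↑p : Fin n)).val = p := Fin.val_cast_of_lt (by omega)
  have := congrArg Fin.val h2
  rw [hh, fin_neg_val, hh] at this
  split_ifs at this <;> omega

lemma fin_ne_add {n : ℕ} [NeZero n] (u : Fin n) (p : ℕ) (hp1 : 1 ≤ p) (hp2 : p < n) :
    u ≠ u + (↑p : Fin n) := by
  intro h
  have h2 : (0 : Fin n) = ↑p := by
    have := congrArg (fun z => z - u) h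
    simpa [sub_self, add_sub_cancel_left] using this
  have hh : ((↑p : Fin n)).val = p := Fin.val_cast_of_lt (by omega)
  have := congrArg Fin.val h2
  rw [hh] at this
  simp at this
  omega

lemma fin_ne_sub {n : ℕ} [NeZero n] (u : Fin n) (p : ℕ) (hp1 : 1 ≤ p) (hp2 : p < n) :
    u ≠ u - (↑p : Fin n) := by
  intro h
  have h2 : (0 : Fin n) = -↑p := by
    have := congrArg (fun z => z - u) h
    simpa [sub_self, sub_eq_add_neg, add_comm, add_sub_cancel_left] using this
  have hh : ((↑p : Fin n)).val = p := Fin.val_cast_of_lt (by omega)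
  have := congrArg Fin.val h2
  rw [fin_neg_val, hh] at this
  simp at this
  have := this (by omega); omega

lemma cD_self {n : ℕ} (u : Fin n) : cD u u = 0 := by
  simp [cD, fin_sub_val]

lemma cyc_adj_iff {n : ℕ} [NeZero n] (hn : 2 ≤ n) (a b : Fin n) :
    (cycleGraph n).Adj a b ↔ a = b + (↑(1:ℕ) : Fin n) ∨ a = b - (↑(1:ℕ) : Fin n) := by
  have hone : ((↑(1:ℕ) : Fin n)).val = 1 := Fin.val_cast_of_lt (by omega)
  rw [cycleGraph_adj']
  constructor
  · rintro (h | h)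
    · left
      have : a - b = (↑(1:ℕ) : Fin n) := Fin.ext (by rw [hone]; exact h)
      rw [← this]; ring
    · right
      have : b - a = (↑(1:ℕ) : Fin n) := Fin.ext (by rw [hone]; exact h)
      rw [← this]; ring
  · rintro (rfl | rfl)
    · left; rw [add_sub_cancel_left, hone]
    · right; rw [sub_sub_cancel, hone]

lemma TG_conn {r s : ℕ} (hr : 1 ≤ r) (hs : 1 ≤ s) :
    ((cycleGraph r).boxProd (cycleGraph s)).Connected := by
  obtain ⟨a, rfl⟩ : ∃ m, r = m + 1 := ⟨r - 1, by omega⟩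
  obtain ⟨b, rfl⟩ : ∃ m, s = m + 1 := ⟨s - 1, by omega⟩
  exact Connected.boxProd cycleGraph_connected cycleGraph_connected

lemma TG_dist {r s : ℕ} (hr : 2 ≤ r) (hs : 2 ≤ s) (x y : Fin r × Fin s) :
    ((cycleGraph r).boxProd (cycleGraph s)).dist x y = cD x.1 y.1 + cD x.2 y.2 := by
  have h1 : (cycleGraph r).Connected := by
    obtain ⟨a, rfl⟩ : ∃ m, r = m + 1 := ⟨r - 1, by omega⟩
    exact cycleGraph_connected
  have h2 : (cycleGraph s).Connected := by
    obtain ⟨a, rfl⟩ : ∃ m, s = m + 1 := ⟨s - 1, by omega⟩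
    exact cycleGraph_connected
  rw [boxProd_dist h1 h2, cycle_dist hr, cycle_dist hs]

lemma TG_adj_iff {r s : ℕ} [NeZero r] [NeZero s] (hr : 2 ≤ r) (hs : 2 ≤ s)
    (z w : Fin r × Fin s) :
    ((cycleGraph r).boxProd (cycleGraph s)).Adj z w ↔
      z = (w.1 + (↑(1:ℕ) : Fin r), w.2) ∨ z = (w.1 - (↑(1:ℕ) : Fin r), w.2) ∨
      z = (w.1, w.2 + (↑(1:ℕ) : Fin s)) ∨ z = (w.1, w.2 - (↑(1:ℕ) : Fin s)) := by
  obtain ⟨z1, z2⟩ := z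
  obtain ⟨w1, w2⟩ := w
  rw [boxProd_adj]
  simp only [cyc_adj_iff hr, cyc_adj_iff hs, Prod.mk.injEq]
  tauto

section main

variable {r s : ℕ} [NeZero r] [NeZero s]

/-- the antipode -/
def apo (r s : ℕ) [NeZero r] [NeZero s] (x : Fin r × Fin s) : Fin r × Fin s :=
  (x.1 + (↑(r/2) : Fin r), x.2 + (↑(s/2) : Fin s))

variable (hr : 4 ≤ r) (hs : 4 ≤ s) (hre : Even r) (hse : Even s)
include hr hs hre hse

lemma dist_apo (z x : Fin r × Fin s) :
    ((cycleGraph r).boxProd (cycleGraph s)).dist z (apo r s x)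
      + ((cycleGraph r).boxProd (cycleGraph s)).dist z x = r/2 + s/2 := by
  rw [TG_dist (by omega) (by omega), TG_dist (by omega) (by omega)]
  have h1 := cD_ap hre (by omega) x.1 z.1
  have h2 := cD_ap hse (by omega) x.2 z.2
  simp only [apo]
  omega

lemma dist_self_apo (x : Fin r × Fin s) :
    ((cycleGraph r).boxProd (cycleGraph s)).dist x (apo r s x) = r/2 + s/2 := by
  have := dist_apo hr hs hre hse x x
  rwa [dist_self, add_zero] at this

lemma dist_le_half (z x : Fin r × Fin s) :
    ((cycleGraph r).boxProd (cycleGraph s)).dist z x ≤ r/2 + s/2 := by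
  have := dist_apo hr hs hre hse z x
  omega

lemma eq_apo_of_dist (z x : Fin r × Fin s)
    (h : ((cycleGraph r).boxProd (cycleGraph s)).dist z x = r/2 + s/2) :
    z = apo r s x := by
  have h1 := dist_apo hr hs hre hse z x
  have h2 : ((cycleGraph r).boxProd (cycleGraph s)).dist z (apo r s x) = 0 := by omega
  exact ((TG_conn (by omega) (by omega)).dist_eq_zero_iff).mp h2

lemma apo_ne (x : Fin r × Fin s) : apo r s x ≠ x := by
  intro h
  have h1 : x.1 + (↑(r/2) : Fin r) = x.1 := congrArg Prod.fst h
  exact fin_ne_add x.1 (r/2) (by omega) (by omega) h1.symm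

lemma dist_eq_zero_iff' (z x : Fin r × Fin s) :
    ((cycleGraph r).boxProd (cycleGraph s)).dist z x = 0 ↔ z = x :=
  (TG_conn (by omega) (by omega)).dist_eq_zero_iff

/-- the singleton class of the antipode -/
lemma cls_singleton (x : Fin r × Fin s) :
    cls ((cycleGraph r).boxProd (cycleGraph s)) {x} (apo r s x) = {apo r s x} := by
  ext z
  simp only [cls, sameDists, Set.mem_setOf_eq, Set.mem_singleton_iff, forall_eq]
  constructor
  · rintro ⟨-, h2⟩
    rw [dist_comm, dist_self_apo hr hs hre hse] at h2
    exact (eq_apo_of_dist hr hs hre hse z x (by rw [← h2])).symm.symm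
  · rintro rfl
    refine ⟨fun h => apo_ne hr hs hre hse x h, ?_⟩
    rfl

omit hr hs hre hse in
lemma ncard_four {a b c d : Fin r × Fin s} (h1 : a ≠ b) (h2 : a ≠ c) (h3 : a ≠ d)
    (h4 : b ≠ c) (h5 : b ≠ d) (h6 : c ≠ d) : ({a, b, c, d} : Set (Fin r × Fin s)).ncard = 4 := by
  rw [Set.ncard_insert_of_notMem (by simp [h1, h2, h3]) (Set.toFinite _),
      Set.ncard_insert_of_notMem (by simp [h4, h5]) (Set.toFinite _),
      Set.ncard_pair h6]

lemma cross_facts (w : Fin r × Fin s) :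
    ∃ a b d e : Fin r × Fin s, a ≠ b ∧ a ≠ d ∧ a ≠ e ∧ b ≠ d ∧ b ≠ e ∧ d ≠ e ∧
      ((cycleGraph r).boxProd (cycleGraph s)).dist a w = 1 ∧
      ((cycleGraph r).boxProd (cycleGraph s)).dist b w = 1 ∧
      ((cycleGraph r).boxProd (cycleGraph s)).dist d w = 1 ∧
      ((cycleGraph r).boxProd (cycleGraph s)).dist e w = 1 ∧
      (∀ z, ((cycleGraph r).boxProd (cycleGraph s)).dist z w = 1 →
        z = a ∨ z = b ∨ z = d ∨ z = e) := by
  have ea1 : cD (w.1 + (↑(1:ℕ) : Fin r)) w.1 = 1 := by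
    rw [cD_comm]; exact cD_add_right _ 1 (by omega)
  have eb1 : cD (w.1 - (↑(1:ℕ) : Fin r)) w.1 = 1 := by
    rw [cD_comm]; exact cD_sub_right _ 1 (by omega)
  have ed2 : cD (w.2 + (↑(1:ℕ) : Fin s)) w.2 = 1 := by
    rw [cD_comm]; exact cD_add_right _ 1 (by omega)
  have ee2 : cD (w.2 - (↑(1:ℕ) : Fin s)) w.2 = 1 := by
    rw [cD_comm]; exact cD_sub_right _ 1 (by omega)
  have c1 : cD w.1 w.1 = 0 := cD_self w.1
  have c2 : cD w.2 w.2 = 0 := cD_self w.2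
  refine ⟨(w.1 + ↑(1:ℕ), w.2), (w.1 - ↑(1:ℕ), w.2), (w.1, w.2 + ↑(1:ℕ)), (w.1, w.2 - ↑(1:ℕ)),
    fun h => fin_add_ne_sub w.1 1 (by omega) (by omega) (congrArg Prod.fst h),
    fun h => fin_ne_add w.1 1 (by omega) (by omega) (congrArg Prod.fst h).symm,
    fun h => fin_ne_add w.1 1 (by omega) (by omega) (congrArg Prod.fst h).symm,
    fun h => fin_ne_sub w.1 1 (by omega) (by omega) (congrArg Prod.fst h).symm,
    fun h => fin_ne_sub w.1 1 (by omega) (by omega) (congrArg Prod.fst h).symm,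
    fun h => fin_add_ne_sub w.2 1 (by omega) (by omega) (congrArg Prod.snd h),
    ?_, ?_, ?_, ?_, ?_⟩
  · rw [TG_dist (by omega) (by omega)]; simp only []; rw [ea1, c2]
  · rw [TG_dist (by omega) (by omega)]; simp only []; rw [eb1, c2]
  · rw [TG_dist (by omega) (by omega)]; simp only []; rw [c1, ed2]
  · rw [TG_dist (by omega) (by omega)]; simp only []; rw [c1, ee2]
  · intro z hz
    have hadj := dist_eq_one_iff_adj.mp hz
    exact (TG_adj_iff (by omega) (by omega) z w).mp hadj

lemma exists_four (x : Fin r × Fin s) (c : ℕ) (hc1 : 1 ≤ c) (hc2 : c ≤ r/2 + s/2 - 1) :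
    ∃ a b d e : Fin r × Fin s, a ≠ b ∧ a ≠ d ∧ a ≠ e ∧ b ≠ d ∧ b ≠ e ∧ d ≠ e ∧
      ((cycleGraph r).boxProd (cycleGraph s)).dist a x = c ∧
      ((cycleGraph r).boxProd (cycleGraph s)).dist b x = c ∧
      ((cycleGraph r).boxProd (cycleGraph s)).dist d x = c ∧
      ((cycleGraph r).boxProd (cycleGraph s)).dist e x = c := by
  rcases eq_or_ne c 1 with rfl | hne1
  · obtain ⟨a, b, d, e, h⟩ := cross_facts hr hs hre hse x
    exact ⟨a, b, d, e, h.1, h.2.1, h.2.2.1, h.2.2.2.1, h.2.2.2.2.1, h.2.2.2.2.2.1,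
      h.2.2.2.2.2.2.1, h.2.2.2.2.2.2.2.1, h.2.2.2.2.2.2.2.2.1, h.2.2.2.2.2.2.2.2.2.1⟩
  rcases eq_or_ne c (r/2 + s/2 - 1) with rfl | hne2
  · obtain ⟨a, b, d, e, n1, n2, n3, n4, n5, n6, d1, d2, d3, d4, -⟩ :=
      cross_facts hr hs hre hse (apo r s x)
    have k1 := dist_apo hr hs hre hse a x
    have k2 := dist_apo hr hs hre hse b x
    have k3 := dist_apo hr hs hre hse d x
    have k4 := dist_apo hr hs hre hse e x
    exact ⟨a, b, d, e, n1, n2, n3, n4, n5, n6, by omega, by omega, by omega, by omega⟩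
  · obtain ⟨p, q, hc, hp1, hp2, hq1, hq2⟩ :
        ∃ p q : ℕ, p + q = c ∧ 1 ≤ p ∧ p ≤ r/2 - 1 ∧ 1 ≤ q ∧ q ≤ s/2 - 1 := by
      rcases le_or_gt c (s/2) with h | h
      · exact ⟨1, c - 1, by omega, by omega, by omega, by omega, by omega⟩
      · exact ⟨c - s/2 + 1, s/2 - 1, by omega, by omega, by omega, by omega, by omega⟩
    have eap : cD (x.1 + (↑p : Fin r)) x.1 = p := by
      rw [cD_comm]; exact cD_add_right _ p (by omega)
    have esp : cD (x.1 - (↑p : Fin r)) x.1 = p := by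
      rw [cD_comm]; exact cD_sub_right _ p (by omega)
    have eaq : cD (x.2 + (↑q : Fin s)) x.2 = q := by
      rw [cD_comm]; exact cD_add_right _ q (by omega)
    have esq : cD (x.2 - (↑q : Fin s)) x.2 = q := by
      rw [cD_comm]; exact cD_sub_right _ q (by omega)
    refine ⟨(x.1 + ↑p, x.2 + ↑q), (x.1 + ↑p, x.2 - ↑q), (x.1 - ↑p, x.2 + ↑q),
      (x.1 - ↑p, x.2 - ↑q),
      fun h => fin_add_ne_sub x.2 q (by omega) (by omega) (congrArg Prod.snd h),
      fun h => fin_add_ne_sub x.1 p (by omega) (by omega) (congrArg Prod.fst h),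
      fun h => fin_add_ne_sub x.1 p (by omega) (by omega) (congrArg Prod.fst h),
      fun h => fin_add_ne_sub x.1 p (by omega) (by omega) (congrArg Prod.fst h),
      fun h => fin_add_ne_sub x.1 p (by omega) (by omega) (congrArg Prod.fst h),
      fun h => fin_add_ne_sub x.2 q (by omega) (by omega) (congrArg Prod.snd h),
      ?_, ?_, ?_, ?_⟩
    · rw [TG_dist (by omega) (by omega)]; simp only []; rw [eap, eaq]; omega
    · rw [TG_dist (by omega) (by omega)]; simp only []; rw [eap, esq]; omega
    · rw [TG_dist (by omega) (by omega)]; simp only []; rw [esp, eaq]; omega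
    · rw [TG_dist (by omega) (by omega)]; simp only []; rw [esp, esq]; omega


lemma isKARS_one (x : Fin r × Fin s) :
    IsKARS ((cycleGraph r).boxProd (cycleGraph s)) 1 {x} := by
  refine ⟨⟨x, rfl⟩, ⟨apo r s x, fun h => apo_ne hr hs hre hse x h⟩, ?_, ?_⟩
  · intro y hy
    have hmem : y ∈ cls ((cycleGraph r).boxProd (cycleGraph s)) {x} y :=
      ⟨hy, fun z _ => rfl⟩
    have := (Set.ncard_pos (Set.toFinite _)).mpr ⟨y, hmem⟩
    omega
  · refine ⟨apo r s x, fun h => apo_ne hr hs hre hse x h, ?_⟩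
    rw [cls_singleton hr hs hre hse]
    exact Set.ncard_singleton _

lemma isKARS_four (x : Fin r × Fin s) :
    IsKARS ((cycleGraph r).boxProd (cycleGraph s)) 4 {x, apo r s x} := by
  have hdax : ((cycleGraph r).boxProd (cycleGraph s)).dist (apo r s x) x = r/2 + s/2 := by
    rw [dist_comm]; exact dist_self_apo hr hs hre hse x
  have hsub : ∀ y ∉ ({x, apo r s x} : Set (Fin r × Fin s)), ∀ z,
      ((cycleGraph r).boxProd (cycleGraph s)).dist z x
        = ((cycleGraph r).boxProd (cycleGraph s)).dist y x →
      z ∈ cls ((cycleGraph r).boxProd (cycleGraph s)) {x, apo r s x} y := by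
    intro y hy z hz
    have hy1 : y ≠ x := fun h => hy (by simp [h])
    have hy2 : y ≠ apo r s x := fun h => hy (by simp [h])
    constructor
    · intro hmem
      simp only [Set.mem_insert_iff, Set.mem_singleton_iff] at hmem
      rcases hmem with h | h
      · rw [h, SimpleGraph.dist_self] at hz
        exact hy1 ((dist_eq_zero_iff' hr hs hre hse y x).mp hz.symm)
      · rw [h, hdax] at hz
        exact hy2 (eq_apo_of_dist hr hs hre hse y x hz.symm)
    · intro w hw
      simp only [Set.mem_insert_iff, Set.mem_singleton_iff] at hw
      rcases hw with h | h
      · rw [h]; exact hz.symm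
      · have k1 := dist_apo hr hs hre hse z x
        have k2 := dist_apo hr hs hre hse y x
        rw [h]; omega
  refine ⟨⟨x, by simp⟩, ?_, ?_, ?_⟩
  · -- complement nonempty
    obtain ⟨a, b, d, e, -, -, -, -, -, -, da, -, -, -, -⟩ := cross_facts hr hs hre hse x
    refine ⟨a, ?_⟩
    intro hmem
    simp only [Set.mem_insert_iff, Set.mem_singleton_iff] at hmem
    rcases hmem with h | h
    · rw [h, SimpleGraph.dist_self] at da; omega
    · rw [h, hdax] at da; omega
  · intro y hy
    have hy1 : y ≠ x := fun h => hy (by simp [h])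
    have hy2 : y ≠ apo r s x := fun h => hy (by simp [h])
    have hc1 : ((cycleGraph r).boxProd (cycleGraph s)).dist y x ≠ 0 :=
      fun h => hy1 ((dist_eq_zero_iff' hr hs hre hse y x).mp h)
    have hcle := dist_le_half hr hs hre hse y x
    have hcne : ((cycleGraph r).boxProd (cycleGraph s)).dist y x ≠ r/2 + s/2 :=
      fun h => hy2 (eq_apo_of_dist hr hs hre hse y x h)
    obtain ⟨a, b, d, e, n1, n2, n3, n4, n5, n6, da, db, dd, de⟩ :=
      exists_four hr hs hre hse x (((cycleGraph r).boxProd (cycleGraph s)).dist y x)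
        (by omega) (by omega)
    have hss : ({a, b, d, e} : Set (Fin r × Fin s))
        ⊆ cls ((cycleGraph r).boxProd (cycleGraph s)) {x, apo r s x} y := by
      intro z hzm
      simp only [Set.mem_insert_iff, Set.mem_singleton_iff] at hzm
      rcases hzm with h | h | h | h
      · exact hsub y hy z (by rw [h, da])
      · exact hsub y hy z (by rw [h, db])
      · exact hsub y hy z (by rw [h, dd])
      · exact hsub y hy z (by rw [h, de])
    calc (4 : ℕ) = ({a, b, d, e} : Set (Fin r × Fin s)).ncard :=
          (ncard_four n1 n2 n3 n4 n5 n6).symm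
      _ ≤ _ := Set.ncard_le_ncard hss (Set.toFinite _)
  · obtain ⟨a, b, d, e, n1, n2, n3, n4, n5, n6, da, db, dd, de, hchar⟩ :=
      cross_facts hr hs hre hse x
    have haS : a ∉ ({x, apo r s x} : Set (Fin r × Fin s)) := by
      intro hmem
      simp only [Set.mem_insert_iff, Set.mem_singleton_iff] at hmem
      rcases hmem with h | h
      · rw [h, SimpleGraph.dist_self] at da; omega
      · rw [h, hdax] at da; omega
    refine ⟨a, haS, ?_⟩
    have hcls : cls ((cycleGraph r).boxProd (cycleGraph s)) {x, apo r s x} a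
        = {a, b, d, e} := by
      ext z
      constructor
      · rintro ⟨hz1, hz2⟩
        have hzx : ((cycleGraph r).boxProd (cycleGraph s)).dist z x = 1 := by
          rw [← hz2 x (by simp), da]
        have := hchar z hzx
        simp only [Set.mem_insert_iff, Set.mem_singleton_iff]
        tauto
      · intro hzm
        simp only [Set.mem_insert_iff, Set.mem_singleton_iff] at hzm
        rcases hzm with h | h | h | h
        · exact hsub a haS z (by rw [h])
        · exact hsub a haS z (by rw [h, db, da])
        · exact hsub a haS z (by rw [h, dd, da])
        · exact hsub a haS z (by rw [h, de, da])
    rw [hcls]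
    exact ncard_four n1 n2 n3 n4 n5 n6


end main
/-- For even `r, s ≥ 4`, `adim_4(C_r □ C_s) = 2`: any vertex together with its unique
antipodal vertex is a 4-ARS, and every singleton is only a 1-ARS. -/
theorem stmt3 (r s : ℕ) (hr : 4 ≤ r) (hs : 4 ≤ s) (hre : Even r) (hse : Even s) :
    adim ((cycleGraph r).boxProd (cycleGraph s)) 4 = 2 ∧
    (∀ x : Fin r × Fin s,
      IsKARS ((cycleGraph r).boxProd (cycleGraph s)) 4
        ({x, (x.1 + ⟨r / 2, by omega⟩, x.2 + ⟨s / 2, by omega⟩)} : Set (Fin r × Fin s))) ∧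
    (∀ x : Fin r × Fin s, IsKARS ((cycleGraph r).boxProd (cycleGraph s)) 1 {x}) := by
  haveI : NeZero r := ⟨by omega⟩
  haveI : NeZero s := ⟨by omega⟩
  have hconv : ∀ x : Fin r × Fin s,
      ((x.1 + ⟨r / 2, by omega⟩, x.2 + ⟨s / 2, by omega⟩) : Fin r × Fin s) = apo r s x := by
    intro x
    unfold apo
    refine Prod.ext ?_ ?_ <;> simp only []
    · congr 1
      exact Fin.ext (by rw [Fin.val_cast_of_lt (by omega)])
    · congr 1
      exact Fin.ext (by rw [Fin.val_cast_of_lt (by omega)])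
  refine ⟨?_, ?_, fun x => isKARS_one hr hs hre hse x⟩
  · obtain ⟨x0⟩ : Nonempty (Fin r × Fin s) := ⟨(⟨0, by omega⟩, ⟨0, by omega⟩)⟩
    have hmem2 : (2 : ℕ∞) ∈ (fun S => (S.ncard : ℕ∞)) ''
        {S : Set (Fin r × Fin s) | IsKARS ((cycleGraph r).boxProd (cycleGraph s)) 4 S} := by
      refine ⟨{x0, apo r s x0}, isKARS_four hr hs hre hse x0, ?_⟩
      show ((Set.ncard _ : ℕ) : ℕ∞) = 2
      rw [Set.ncard_pair (fun h => apo_ne hr hs hre hse x0 h.symm)]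
      rfl
    unfold adim
    refine le_antisymm (sInf_le hmem2) (le_sInf ?_)
    rintro b ⟨S, hS, rfl⟩
    have h2 : 2 ≤ S.ncard := by
      by_contra hcon
      push_neg at hcon
      obtain ⟨w, hw⟩ := hS.1
      have h1 : 1 ≤ S.ncard := (Set.ncard_pos (Set.toFinite _)).mpr ⟨w, hw⟩
      have hone : S.ncard = 1 := by omega
      obtain ⟨v, rfl⟩ := Set.ncard_eq_one.mp hone
      have h4 := hS.2.2.1 (apo r s v) (fun h => apo_ne hr hs hre hse v h)
      rw [cls_singleton hr hs hre hse, Set.ncard_singleton] at h4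
      omega
    show (2 : ℕ∞) ≤ ((S.ncard : ℕ) : ℕ∞)
    exact_mod_cast h2
  · intro x
    rw [hconv x]
    exact isKARS_four hr hs hre hse x
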